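/- Let k be an algebraically closed field of characteristic 2 and b ∈ k with b³ = 1 and b ≠ 1. Let K ≤ GL₆(k) be the subgroup generated by the permutation matrices of (1 5)(4 6) and (1 4 5 6)(2 3) together with the diagonal matrix diag(b, b⁻¹, 1, 1, 1, 1). Then the natural 6-dimensional module k⁶ is a semisimple K-module: every K-invariant subspace of k⁶ admits a K-invariant direct complement. -/

import Mathlib

open Matrix

/-- The invertible permutation matrix associated to a permutation, as an element of `GL n k`. -/
noncomputable def permGL (k : Type*) [Field k] {n : Type*} [DecidableEq n] [Fintype n]
    (s : Equiv.Perm n) : Matrix.GeneralLinearGroup n k :=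
  Matrix.GeneralLinearGroup.mkOfDetNeZero (s.permMatrix k)
    (by
      rw [Matrix.det_permutation]
      rcases Int.units_eq_one_or (Equiv.Perm.sign s) with h | h <;> simp [h])

/-- The invertible diagonal matrix with nonzero diagonal entries `d`, as an element of `GL n k`. -/
noncomputable def diagGL (k : Type*) [Field k] {n : Type*} [DecidableEq n] [Fintype n]
    (d : n → k) (h : ∀ i, d i ≠ 0) : Matrix.GeneralLinearGroup n k :=
  Matrix.GeneralLinearGroup.mkOfDetNeZero (Matrix.diagonal d)
    (by rw [Matrix.det_diagonal]; exact Finset.prod_ne_zero_iff.mpr fun i _ => h i)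

section Aux
variable {k : Type*} [Field k]

private def vanishOn (k : Type*) [Field k] (S : Set (Fin 6)) : Submodule k (Fin 6 → k) where
  carrier := {v | ∀ i ∈ S, v i = 0}
  add_mem' := fun ha hb i hi => by simp [Pi.add_apply, ha i hi, hb i hi]
  zero_mem' := fun i _ => rfl
  smul_mem' := fun c v hv i hi => by simp [hv i hi]

private lemma mem_vanishOn {S : Set (Fin 6)} {v : Fin 6 → k} :
    v ∈ vanishOn k S ↔ ∀ i ∈ S, v i = 0 := Iff.rfl

private lemma perm_mulVec (σ : Equiv.Perm (Fin 6)) (v : Fin 6 → k) :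
    (σ.permMatrix k).mulVec v = fun i => v (σ i) := by
  funext i
  simp [Matrix.mulVec, dotProduct, Equiv.Perm.permMatrix, PEquiv.toMatrix_apply,
    Equiv.toPEquiv_apply, ite_and, Finset.sum_ite_eq]

private lemma perm_mul_diagonal (σ : Equiv.Perm (Fin 6)) (d e : Fin 6 → k) (h : ∀ i, e i = d (σ i)) :
    (σ.permMatrix k) * Matrix.diagonal d = Matrix.diagonal e * (σ.permMatrix k) := by
  ext i j
  rw [Matrix.mul_diagonal, Matrix.diagonal_mul]
  simp only [Equiv.Perm.permMatrix, PEquiv.toMatrix_apply, Equiv.toPEquiv_apply, Option.mem_def,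
    Option.some.injEq]
  by_cases hij : σ i = j
  · subst hij; simp [h]
  · simp [hij]

private lemma inv_stab (g : Matrix.GeneralLinearGroup (Fin 6) k) (q : Submodule k (Fin 6 → k))
    (h : ∀ v ∈ q, (g : Matrix (Fin 6) (Fin 6) k).mulVec v ∈ q) :
    ∀ v ∈ q, ((g⁻¹ : Matrix.GeneralLinearGroup (Fin 6) k) : Matrix (Fin 6) (Fin 6) k).mulVec v ∈ q := by
  have hig : ∀ w : Fin 6 → k,
      ((g⁻¹ : Matrix.GeneralLinearGroup (Fin 6) k) : Matrix (Fin 6) (Fin 6) k).mulVec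
        ((g : Matrix (Fin 6) (Fin 6) k).mulVec w) = w := by
    intro w
    rw [Matrix.mulVec_mulVec, ← Matrix.GeneralLinearGroup.coe_mul, inv_mul_cancel,
      Matrix.GeneralLinearGroup.coe_one, Matrix.one_mulVec]
  set f : q →ₗ[k] q := LinearMap.restrict ((Matrix.mulVecLin (g : Matrix (Fin 6) (Fin 6) k)))
    (fun x hx => h x hx) with hf
  have hinj : Function.Injective f := by
    intro x y hxy
    have h1 : (g : Matrix (Fin 6) (Fin 6) k).mulVec x = (g : Matrix (Fin 6) (Fin 6) k).mulVec y := by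
      have := congrArg (Subtype.val) hxy
      exact this
    have := congrArg
      (((g⁻¹ : Matrix.GeneralLinearGroup (Fin 6) k) : Matrix (Fin 6) (Fin 6) k).mulVec) h1
    rw [hig, hig] at this
    exact Subtype.ext this
  have hsurj : Function.Surjective f := (LinearMap.injective_iff_surjective).mp hinj
  intro v hv
  obtain ⟨⟨w, hw⟩, hwe⟩ := hsurj ⟨v, hv⟩
  have hgw : (g : Matrix (Fin 6) (Fin 6) k).mulVec w = v := by
    have := congrArg (Subtype.val) hwe
    exact this
  rw [← hgw, hig]
  exact hw

private lemma extract (p : Submodule k (Fin 6 → k)) (d : Fin 6 → k)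
    (hd : ∀ v ∈ p, (fun j => d j * v j) ∈ p) (c0 c1 c2 : k) (i : Fin 6)
    (hone : c2 * d i * d i + c1 * d i + c0 = 1)
    (hzero : ∀ j, j ≠ i → c2 * d j * d j + c1 * d j + c0 = 0) :
    ∀ v ∈ p, (fun j => if j = i then v j else 0) ∈ p := by
  intro v hv
  have h1 := hd v hv
  have h2 := hd _ h1
  have key : (fun j => if j = i then v j else 0)
      = c2 • (fun j => d j * (d j * v j)) + c1 • (fun j => d j * v j) + c0 • v := by
    funext j
    simp only [Pi.add_apply, Pi.smul_apply, smul_eq_mul]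
    by_cases hj : j = i
    · subst hj
      rw [if_pos rfl]
      linear_combination (-(v j)) * hone
    · rw [if_neg hj]
      linear_combination (-(v j)) * hzero j hj
  rw [key]
  exact add_mem (add_mem (Submodule.smul_mem _ _ h2) (Submodule.smul_mem _ _ h1))
    (Submodule.smul_mem _ _ hv)

end Aux

theorem stmt_3 (k : Type*) [Field k] [IsAlgClosed k] [CharP k 2]
    (b : k) (hb3 : b ^ 3 = 1) (hb1 : b ≠ 1)
    (K : Subgroup (Matrix.GeneralLinearGroup (Fin 6) k))
    (hK : K = Subgroup.closure
      { permGL k (c[(0 : Fin 6), 4] * c[(3 : Fin 6), 5]),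
        permGL k (c[(0 : Fin 6), 3, 4, 5] * c[(1 : Fin 6), 2]),
        diagGL k ![b, b⁻¹, 1, 1, 1, 1] (by
          have hb0 : b ≠ 0 := fun h => by simp [h] at hb3
          intro i
          fin_cases i
          exacts [hb0, inv_ne_zero hb0, one_ne_zero, one_ne_zero, one_ne_zero, one_ne_zero]) })
    (p : Submodule k (Fin 6 → k))
    (hp : ∀ g ∈ K, ∀ v ∈ p, (g : Matrix (Fin 6) (Fin 6) k).mulVec v ∈ p) :
    ∃ q : Submodule k (Fin 6 → k),
      (∀ g ∈ K, ∀ v ∈ q, (g : Matrix (Fin 6) (Fin 6) k).mulVec v ∈ q) ∧ IsCompl p q := by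
  classical
  -- basic field facts
  have hb0 : b ≠ 0 := fun h => by simp [h] at hb3
  have h2 : (2 : k) = 0 := by
    have := CharP.cast_eq_zero k 2
    exact_mod_cast this
  have hbq : b ^ 2 + b + 1 = 0 := by
    have h : (b - 1) * (b ^ 2 + b + 1) = 0 := by linear_combination hb3
    rcases mul_eq_zero.mp h with h | h
    · exact absurd (sub_eq_zero.mp h) hb1
    · exact h
  have hbi : b⁻¹ = b ^ 2 := inv_eq_of_mul_eq_one_right (by linear_combination hb3)
  -- value table for the Lagrange interpolation polynomials
  have Lb1 : b * 1 * 1 + b ^ 2 * 1 + 1 = (0 : k) := by linear_combination hbq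
  have Lbb : b * b * b + b ^ 2 * b + 1 = (1 : k) := by linear_combination 2 * hb3 + h2
  have Lbb2 : b * b ^ 2 * b ^ 2 + b ^ 2 * b ^ 2 + 1 = (0 : k) := by
    linear_combination (b ^ 2 + b) * hb3 + hbq
  have Mb1 : b ^ 2 * 1 * 1 + b * 1 + 1 = (0 : k) := by linear_combination hbq
  have Mbb : b ^ 2 * b * b + b * b + 1 = (0 : k) := by linear_combination b * hb3 + hbq
  have Mbb2 : b ^ 2 * b ^ 2 * b ^ 2 + b * b ^ 2 + 1 = (1 : k) := by
    linear_combination (b ^ 3 + 2) * hb3 + h2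
  -- the permutations
  set σ1 : Equiv.Perm (Fin 6) := c[(0 : Fin 6), 4] * c[(3 : Fin 6), 5] with hσ1def
  set τ : Equiv.Perm (Fin 6) := c[(0 : Fin 6), 3, 4, 5] * c[(1 : Fin 6), 2] with hτdef
  have hτv : ∀ i : Fin 6, τ i = ![3, 2, 1, 4, 5, 0] i := by rw [hτdef]; decide
  have hσ1v : ∀ i : Fin 6, σ1 i = ![4, 1, 2, 5, 0, 3] i := by rw [hσ1def]; decide
  have hτ3 : ∀ j : Fin 6, τ⁻¹ (τ⁻¹ (τ⁻¹ j)) = τ j := by rw [hτdef]; decide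
  have hσ1inv : ∀ j : Fin 6, σ1⁻¹ j = σ1 j := by rw [hσ1def]; decide
  -- generators are in K
  have hσ1K : permGL k σ1 ∈ K := by
    rw [hK]; exact Subgroup.subset_closure (Set.mem_insert _ _)
  have hτK : permGL k τ ∈ K := by
    rw [hK]; exact Subgroup.subset_closure (Set.mem_insert_of_mem _ (Set.mem_insert _ _))
  -- action of permutation matrices on p
  have hperm_act : ∀ (σ : Equiv.Perm (Fin 6)), permGL k σ ∈ K →
      ∀ v ∈ p, (fun i => v (σ i)) ∈ p := by
    intro σ hσ v hv
    have := hp _ hσ v hv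
    rwa [show ((permGL k σ : Matrix.GeneralLinearGroup (Fin 6) k) : Matrix (Fin 6) (Fin 6) k)
      = σ.permMatrix k from rfl, perm_mulVec] at this
  -- diagonal matrices in K
  have hdiag_act : ∀ (d : Fin 6 → k), (∃ t ∈ K,
      ((t : Matrix.GeneralLinearGroup (Fin 6) k) : Matrix (Fin 6) (Fin 6) k) = Matrix.diagonal d) →
      ∀ v ∈ p, (fun j => d j * v j) ∈ p := by
    rintro d ⟨t, htK, hmat⟩ v hv
    have := hp t htK v hv
    rwa [hmat, show Matrix.mulVec (Matrix.diagonal d) v = fun j => d j * v j from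
      funext fun j => Matrix.mulVec_diagonal d v j] at this
  have conjK : ∀ (d e : Fin 6 → k), (∀ i, e i = d (τ i)) →
      (∃ t ∈ K, ((t : Matrix.GeneralLinearGroup (Fin 6) k) : Matrix (Fin 6) (Fin 6) k)
        = Matrix.diagonal d) →
      (∃ t ∈ K, ((t : Matrix.GeneralLinearGroup (Fin 6) k) : Matrix (Fin 6) (Fin 6) k)
        = Matrix.diagonal e) := by
    rintro d e he ⟨t, htK, hmat⟩
    refine ⟨permGL k τ * t * (permGL k τ)⁻¹, mul_mem (mul_mem hτK htK) (inv_mem hτK), ?_⟩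
    rw [Units.val_mul, Units.val_mul, hmat,
      show ((permGL k τ : Matrix.GeneralLinearGroup (Fin 6) k) : Matrix (Fin 6) (Fin 6) k)
        = τ.permMatrix k from rfl,
      perm_mul_diagonal τ d e he, mul_assoc]
    rw [show (τ.permMatrix k) = ((permGL k τ : Matrix.GeneralLinearGroup (Fin 6) k)
      : Matrix (Fin 6) (Fin 6) k) from rfl, ← Units.val_mul, mul_inv_cancel, Units.val_one,
      mul_one]
  -- the four diagonal elements
  have ht0 : ∃ t ∈ K, ((t : Matrix.GeneralLinearGroup (Fin 6) k) : Matrix (Fin 6) (Fin 6) k)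
      = Matrix.diagonal ![b, b ^ 2, 1, 1, 1, 1] := by
    refine ⟨diagGL k ![b, b⁻¹, 1, 1, 1, 1]
      (fun i => by
        fin_cases i
        exacts [hb0, inv_ne_zero hb0, one_ne_zero, one_ne_zero, one_ne_zero, one_ne_zero]),
      ?_, ?_⟩
    · rw [hK]
      exact Subgroup.subset_closure
        (Set.mem_insert_of_mem _ (Set.mem_insert_of_mem _ rfl))
    · show Matrix.diagonal ![b, b⁻¹, 1, 1, 1, 1] = Matrix.diagonal ![b, b ^ 2, 1, 1, 1, 1]
      have hvec : (![b, b⁻¹, 1, 1, 1, 1] : Fin 6 → k) = ![b, b ^ 2, 1, 1, 1, 1] := by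
        funext i
        fin_cases i
        exacts [rfl, hbi, rfl, rfl, rfl, rfl]
      rw [hvec]
  have ht1 : ∃ t ∈ K, ((t : Matrix.GeneralLinearGroup (Fin 6) k) : Matrix (Fin 6) (Fin 6) k)
      = Matrix.diagonal ![1, 1, b ^ 2, 1, 1, b] :=
    conjK _ _ (fun i => by fin_cases i <;> rw [hτv] <;> rfl) ht0
  have ht2 : ∃ t ∈ K, ((t : Matrix.GeneralLinearGroup (Fin 6) k) : Matrix (Fin 6) (Fin 6) k)
      = Matrix.diagonal ![1, b ^ 2, 1, 1, b, 1] :=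
    conjK _ _ (fun i => by fin_cases i <;> rw [hτv] <;> rfl) ht1
  have ht3 : ∃ t ∈ K, ((t : Matrix.GeneralLinearGroup (Fin 6) k) : Matrix (Fin 6) (Fin 6) k)
      = Matrix.diagonal ![1, 1, b ^ 2, b, 1, 1] :=
    conjK _ _ (fun i => by fin_cases i <;> rw [hτv] <;> rfl) ht2
  have hd0 := hdiag_act _ ht0
  have hd1 := hdiag_act _ ht1
  have hd2 := hdiag_act _ ht2
  have hd3 := hdiag_act _ ht3
  -- extraction of coordinates
  have hproj : ∀ (i : Fin 6), ∀ v ∈ p, (fun j => if j = i then v j else 0) ∈ p := by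
    intro i
    fin_cases i
    · exact extract p _ hd0 1 (b ^ 2) b 0 Lbb
        (fun j hj => by
          fin_cases j
          exacts [absurd rfl hj, Lbb2, Lb1, Lb1, Lb1, Lb1])
    · exact extract p _ hd0 1 b (b ^ 2) 1 Mbb2
        (fun j hj => by
          fin_cases j
          exacts [Mbb, absurd rfl hj, Mb1, Mb1, Mb1, Mb1])
    · exact extract p _ hd1 1 b (b ^ 2) 2 Mbb2
        (fun j hj => by
          fin_cases j
          exacts [Mb1, Mb1, absurd rfl hj, Mb1, Mb1, Mbb])
    · exact extract p _ hd3 1 (b ^ 2) b 3 Lbb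
        (fun j hj => by
          fin_cases j
          exacts [Lb1, Lb1, Lbb2, absurd rfl hj, Lb1, Lb1])
    · exact extract p _ hd2 1 (b ^ 2) b 4 Lbb
        (fun j hj => by
          fin_cases j
          exacts [Lb1, Lbb2, Lb1, Lb1, absurd rfl hj, Lb1])
    · exact extract p _ hd1 1 (b ^ 2) b 5 Lbb
        (fun j hj => by
          fin_cases j
          exacts [Lb1, Lb1, Lbb2, Lb1, Lb1, absurd rfl hj])
  -- the set of coordinates in p
  set S : Set (Fin 6) := fun i => Pi.single i (1 : k) ∈ p with hSdef
  -- p vanishes outside S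
  have hvanish : ∀ v ∈ p, ∀ i, i ∉ S → v i = 0 := by
    intro v hv i hiS
    by_contra hvi
    apply hiS
    have h1 : (fun j => if j = i then v j else 0) ∈ p := hproj i v hv
    have h2 : Pi.single i (1 : k) = (v i)⁻¹ • (fun j => if j = i then v j else 0) := by
      funext j
      by_cases hj : j = i
      · subst hj; simp [Pi.single_apply, inv_mul_cancel₀ hvi]
      · simp [Pi.single_apply, hj]
    show Pi.single i (1 : k) ∈ p
    rw [h2]
    exact Submodule.smul_mem _ _ h1
  -- S is stable under the permutations
  have hsingle : ∀ (σ : Equiv.Perm (Fin 6)), permGL k σ ∈ K →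
      ∀ i ∈ S, σ⁻¹ i ∈ S := by
    intro σ hσ i hi
    have := hperm_act σ hσ _ hi
    have heq : (fun j => (Pi.single i (1 : k) : Fin 6 → k) (σ j))
        = fun j => (Pi.single (σ⁻¹ i) (1 : k) : Fin 6 → k) j := by
      funext j
      simp only [Pi.single_apply]
      by_cases hj : σ j = i
      · rw [if_pos hj, if_pos]
        rw [← hj]; exact (Equiv.symm_apply_apply σ j).symm
      · rw [if_neg hj, if_neg]
        intro hc
        exact hj (by rw [hc]; exact Equiv.apply_symm_apply σ i)
    show (Pi.single (σ⁻¹ i) (1 : k) : Fin 6 → k) ∈ p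
    rwa [heq] at this
  have hSτ : ∀ i ∈ S, τ i ∈ S := by
    intro i hi
    have h1 := hsingle τ hτK i hi
    have h2 := hsingle τ hτK _ h1
    have h3 := hsingle τ hτK _ h2
    rwa [hτ3] at h3
  have hSσ1 : ∀ i ∈ S, σ1 i ∈ S := by
    intro i hi
    have h1 := hsingle σ1 hσ1K i hi
    rwa [hσ1inv] at h1
  -- the complement
  refine ⟨vanishOn k S, ?_, ?_⟩
  · -- invariance of the complement
    intro g hg
    rw [hK] at hg
    induction hg using Subgroup.closure_induction with
    | mem x hx =>
      rcases hx with hx | hx | hx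
      · subst hx
        intro v hv i hi
        rw [show ((permGL k σ1 : Matrix.GeneralLinearGroup (Fin 6) k)
          : Matrix (Fin 6) (Fin 6) k) = σ1.permMatrix k from rfl, perm_mulVec]
        exact hv (σ1 i) (hSσ1 i hi)
      · subst hx
        intro v hv i hi
        rw [show ((permGL k τ : Matrix.GeneralLinearGroup (Fin 6) k)
          : Matrix (Fin 6) (Fin 6) k) = τ.permMatrix k from rfl, perm_mulVec]
        exact hv (τ i) (hSτ i hi)
      · subst hx
        intro v hv i hi
        show Matrix.mulVec (Matrix.diagonal ![b, b⁻¹, 1, 1, 1, 1]) v i = 0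
        rw [Matrix.mulVec_diagonal, hv i hi, mul_zero]
    | one =>
      intro v hv
      rwa [Units.val_one, Matrix.one_mulVec]
    | mul x y hx hy ihx ihy =>
      intro v hv
      rw [Units.val_mul, ← Matrix.mulVec_mulVec]
      exact ihx _ (ihy v hv)
    | inv x hx ih =>
      exact inv_stab x _ ih
  · -- IsCompl
    constructor
    · rw [disjoint_iff]
      rw [Submodule.eq_bot_iff]
      rintro v ⟨hvp, hvq⟩
      funext i
      by_cases hi : i ∈ S
      · exact hvq i hi
      · exact hvanish v hvp i hi
    · rw [codisjoint_iff, eq_top_iff]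
      intro v _
      have hvS : (fun j => if j ∈ S then v j else 0) ∈ p := by
        have heq : (fun j => if j ∈ S then v j else 0)
            = ∑ i : Fin 6, (if i ∈ S then v i else 0) • (Pi.single i (1 : k) : Fin 6 → k) := by
          funext j
          rw [Finset.sum_apply]
          simp only [Pi.smul_apply, Pi.single_apply, smul_eq_mul, mul_ite, mul_one, mul_zero]
          simp [Finset.sum_ite_eq']
        rw [heq]
        refine Submodule.sum_mem _ fun i _ => ?_
        by_cases hi : i ∈ S
        · exact Submodule.smul_mem _ _ hi
        · rw [if_neg hi, zero_smul]
          exact Submodule.zero_mem _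
      refine Submodule.mem_sup.mpr ⟨(fun j => if j ∈ S then v j else 0), hvS,
        (fun j => if j ∈ S then 0 else v j), ?_, ?_⟩
      · intro i hi
        simp [hi]
      · funext j
        by_cases hj : j ∈ S <;> simp [hj]
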